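/- Let (V, W, F) be a mixed Hodge structure over a subfield k of ℝ. Define I^{p,q}(V) = (F^p ∩ W_{p+q})(V_ℂ) ∩ ( (F̄^q ∩ W_{p+q})(V_ℂ) + Σ_{i>0} (F̄^{q-i} ∩ W_{p+q-1-i})(V_ℂ) ). Then V_ℂ = ⊕_{p,q} I^{p,q}(V) and W_m V_ℂ = ⊕_{p+q ≤ m} I^{p,q}(V) (Deligne's splitting). -/

import Mathlib

/-- The `m`-th graded piece `Gr^W_m V = W_m / W_{m-1}` of a filtered vector space. -/
abbrev grW {V : Type} [AddCommGroup V] [Module ℂ V] (W : ℤ → Submodule ℂ V) (m : ℤ) :=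
  ↥(W m) ⧸ (Submodule.comap (W m).subtype (W (m - 1)))

/-- The filtration induced by a filtration `S` on the graded piece `Gr^W_m V`. -/
noncomputable def grFil {V : Type} [AddCommGroup V] [Module ℂ V]
    (W S : ℤ → Submodule ℂ V) (m p : ℤ) : Submodule ℂ (grW W m) :=
  Submodule.map (Submodule.comap (W m).subtype (W (m - 1))).mkQ
    (Submodule.comap (W m).subtype (S p))

/-- A mixed Hodge structure, encoded on the complexification: a finite-dimensional
complex vector space `V` with a finite exhaustive increasing weight filtration `W`,
a finite decreasing Hodge filtration `F` and its conjugate filtration `G = F̄`,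
such that for each `m` the filtrations induced by `F` and `G` on `Gr^W_m V` define
a pure Hodge structure of weight `m`, i.e. a bigrading
`Gr^W_m V = ⊕_{p+q=m} F^p ∩ G^q`. -/
structure IsMHS {V : Type} [AddCommGroup V] [Module ℂ V]
    (W F G : ℤ → Submodule ℂ V) : Prop where
  fin : FiniteDimensional ℂ V
  monoW : Monotone W
  antiF : Antitone F
  antiG : Antitone G
  w_bot : ∃ a : ℤ, W a = ⊥
  w_top : ∃ b : ℤ, W b = ⊤
  f_top : ∃ a : ℤ, F a = ⊤
  f_bot : ∃ b : ℤ, F b = ⊥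
  g_top : ∃ a : ℤ, G a = ⊤
  g_bot : ∃ b : ℤ, G b = ⊥
  pure : ∀ m : ℤ, DirectSum.IsInternal
    (fun p : ℤ => grFil W F m p ⊓ grFil W G m (m - p))

/-- Deligne's subspace
`I^{p,q} = (F^p ∩ W_{p+q}) ∩ ((F̄^q ∩ W_{p+q}) + Σ_{i>0} (F̄^{q-i} ∩ W_{p+q-1-i}))`. -/
noncomputable def deligneI {V : Type} [AddCommGroup V] [Module ℂ V]
    (W F G : ℤ → Submodule ℂ V) (p q : ℤ) : Submodule ℂ V :=
  (F p ⊓ W (p + q)) ⊓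
    ((G q ⊓ W (p + q)) ⊔
      ⨆ i : ℕ, (G (q - ((i : ℤ) + 1)) ⊓ W (p + q - 2 - (i : ℤ))))

namespace Deligne

variable {V : Type} [AddCommGroup V] [Module ℂ V]

noncomputable def piW (W : ℤ → Submodule ℂ V) (m : ℤ) : ↥(W m) →ₗ[ℂ] grW W m :=
  (Submodule.comap (W m).subtype (W (m - 1))).mkQ

variable {W S F G : ℤ → Submodule ℂ V}

lemma piW_eq_zero_iff {m : ℤ} (y : ↥(W m)) : piW W m y = 0 ↔ (y : V) ∈ W (m - 1) := by
  rw [piW, Submodule.mkQ_apply, Submodule.Quotient.mk_eq_zero, Submodule.mem_comap]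
  simp

lemma mem_grFil {m p : ℤ} (y : ↥(W m)) (hy : (y : V) ∈ S p) :
    piW W m y ∈ grFil W S m p :=
  ⟨y, Submodule.mem_comap.mpr (by simpa), rfl⟩

lemma exists_rep {m p : ℤ} {x : grW W m} (hx : x ∈ grFil W S m p) :
    ∃ y : ↥(W m), (y : V) ∈ S p ∧ piW W m y = x := by
  obtain ⟨y, hy, rfl⟩ := hx
  exact ⟨y, by simpa using hy, rfl⟩

lemma piW_eq {m : ℤ} {y z : ↥(W m)} (hyz : (y : V) - z ∈ W (m - 1)) :
    piW W m y = piW W m z := by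
  have h0 : piW W m (y - z) = 0 := (piW_eq_zero_iff _).2 (by simpa)
  rw [map_sub, sub_eq_zero] at h0
  exact h0

lemma grFil_anti (hS : Antitone S) (m : ℤ) : Antitone (grFil W S m) :=
  fun _ _ hpp' => Submodule.map_mono (Submodule.comap_mono (hS hpp'))

/-! MHS-dependent lemmas -/

lemma W_eq_bot (h : IsMHS W F G) {a n : ℤ} (ha : W a = ⊥) (hn : n ≤ a) : W n = ⊥ :=
  le_antisymm (ha ▸ h.monoW hn) bot_le

/-- disjointness of induced filtrations in complementary-exceeding degrees -/
lemma H_disj (h : IsMHS W F G) {m p q : ℤ} (hpq : m + 1 ≤ p + q) :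
    grFil W F m p ⊓ grFil W G m q = ⊥ := by
  have hind := (h.pure m).submodule_iSupIndep
  have hdisj : Disjoint (grFil W F m p ⊓ grFil W G m (m - p))
      (grFil W F m (m - q) ⊓ grFil W G m (m - (m - q))) :=
    hind.pairwiseDisjoint (by omega)
  have h1 : grFil W F m p ⊓ grFil W G m q ≤ grFil W F m p ⊓ grFil W G m (m - p) :=
    inf_le_inf le_rfl (grFil_anti h.antiG m (by omega))
  have h2 : grFil W F m p ⊓ grFil W G m q ≤
      grFil W F m (m - q) ⊓ grFil W G m (m - (m - q)) :=
    inf_le_inf (grFil_anti h.antiF m (by omega)) (grFil_anti h.antiG m (by omega))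
  exact le_bot_iff.mp ((le_inf h1 h2).trans hdisj.le_bot)

/-- the auxiliary staircase subspace -/
noncomputable def T (W G : ℤ → Submodule ℂ V) (b n : ℤ) : Submodule ℂ V :=
  ⨆ j : ℕ, G (b - (j : ℤ)) ⊓ W (n - (j : ℤ))

lemma T_le_W (hm : Monotone W) (b n : ℤ) : T W G b n ≤ W n :=
  iSup_le fun j => inf_le_right.trans (hm (by omega))

lemma term_le_T {b n : ℤ} (j : ℕ) : G (b - (j : ℤ)) ⊓ W (n - (j : ℤ)) ≤ T W G b n :=
  le_iSup (fun j : ℕ => G (b - (j : ℤ)) ⊓ W (n - (j : ℤ))) j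

lemma T_le_sup (b n : ℤ) : T W G b n ≤ (G b ⊓ W n) ⊔ T W G (b - 1) (n - 1) := by
  refine iSup_le fun j => ?_
  cases j with
  | zero => simpa using le_sup_left
  | succ j' =>
      refine le_trans ?_ (le_sup_right.trans' (term_le_T (G := G) (W := W) j'))
      have e1 : b - ((j' + 1 : ℕ) : ℤ) = b - 1 - (j' : ℤ) := by push_cast; ring
      have e2 : n - ((j' + 1 : ℕ) : ℤ) = n - 1 - (j' : ℤ) := by push_cast; ring
      rw [e1, e2]

/-- Key vanishing lemma -/
lemma keyA (h : IsMHS W F G) {a : ℤ} (ha : W a = ⊥) :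
    ∀ (p b n : ℤ), n + 1 ≤ p + b → F p ⊓ T W G b n = ⊥ := by
  suffices H : ∀ (d : ℕ) (p b n : ℤ), n ≤ a + d → n + 1 ≤ p + b → F p ⊓ T W G b n = ⊥ by
    intro p b n hpb
    refine H (n - a).toNat p b n ?_ hpb
    have := Int.self_le_toNat (n - a)
    omega
  intro d
  induction d with
  | zero =>
      intro p b n hn hpb
      have : T W G b n ≤ (⊥ : Submodule ℂ V) :=
        (T_le_W h.monoW b n).trans (le_of_eq (W_eq_bot h ha (by omega)))
      exact le_bot_iff.mp (inf_le_right.trans this)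
  | succ d ih =>
      intro p b n hn hpb
      by_cases hle : n ≤ a + d
      · exact ih p b n hle hpb
      have hneq : n = a + d + 1 := by omega
      rw [eq_bot_iff]
      rintro v ⟨hvF, hvT⟩
      have hvW : v ∈ W n := T_le_W h.monoW b n hvT
      obtain ⟨u, hu, w, hw, huw⟩ := Submodule.mem_sup.mp (T_le_sup b n hvT)
      have hwW : w ∈ W (n - 1) := T_le_W h.monoW (b - 1) (n - 1) hw
      -- the class of v in Gr_n lies in F^p ∩ G^b, hence vanishes
      have hx1 : piW W n ⟨v, hvW⟩ ∈ grFil W F n p := mem_grFil _ hvF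
      have hxeq : piW W n ⟨v, hvW⟩ = piW W n ⟨u, hu.2⟩ :=
        piW_eq (by simpa [← huw] using hwW)
      have hx2 : piW W n ⟨v, hvW⟩ ∈ grFil W G n b := hxeq ▸ mem_grFil _ hu.1
      have hx0 : piW W n ⟨v, hvW⟩ = 0 := by
        have := H_disj h (m := n) (p := p) (q := b) (by omega)
        have hmem : piW W n ⟨v, hvW⟩ ∈ grFil W F n p ⊓ grFil W G n b := ⟨hx1, hx2⟩
        rw [this] at hmem
        simpa using hmem
      have hvW1 : v ∈ W (n - 1) := (piW_eq_zero_iff _).1 hx0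
      have huW1 : u ∈ W (n - 1) := by
        have : v - w = u := by rw [← huw]; abel
        simpa [this] using Submodule.sub_mem _ hvW1 hwW
      have huT : u ∈ T W G (b - 1) (n - 1) := by
        refine term_le_T (b := b - 1) (n := n - 1) 0 ?_
        exact ⟨h.antiG (by omega : b - 1 - ((0 : ℕ) : ℤ) ≤ b) hu.1, by simpa using huW1⟩
      have hvT' : v ∈ T W G (b - 1) (n - 1) := by
        rw [← huw]; exact Submodule.add_mem _ huT hw
      have := ih p (b - 1) (n - 1) (by omega) (by omega)
      have : v ∈ (⊥ : Submodule ℂ V) := this ▸ Submodule.mem_inf.mpr ⟨hvF, hvT'⟩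
      simpa using this

/-! ### The second factor of `deligneI` -/

noncomputable def Ssup (W G : ℤ → Submodule ℂ V) (p q : ℤ) : Submodule ℂ V :=
  (G q ⊓ W (p + q)) ⊔
    ⨆ i : ℕ, (G (q - ((i : ℤ) + 1)) ⊓ W (p + q - 2 - (i : ℤ)))

lemma deligneI_eq (p q : ℤ) :
    deligneI W F G p q = (F p ⊓ W (p + q)) ⊓ Ssup W G p q := rfl

lemma U_le_W (hm : Monotone W) (p q : ℤ) :
    (⨆ i : ℕ, (G (q - ((i : ℤ) + 1)) ⊓ W (p + q - 2 - (i : ℤ)))) ≤ W (p + q - 2) :=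
  iSup_le fun i => inf_le_right.trans (hm (by omega))

lemma U_le_T (p q : ℤ) :
    (⨆ i : ℕ, (G (q - ((i : ℤ) + 1)) ⊓ W (p + q - 2 - (i : ℤ)))) ≤ T W G q (p + q - 1) := by
  refine iSup_le fun i => ?_
  refine le_trans ?_ (term_le_T (W := W) (G := G) (b := q) (n := p + q - 1) (i + 1))
  have e1 : q - ((i + 1 : ℕ) : ℤ) = q - ((i : ℤ) + 1) := by push_cast; ring
  have e2 : p + q - 1 - ((i + 1 : ℕ) : ℤ) = p + q - 2 - (i : ℤ) := by push_cast; ring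
  rw [e1, e2]

/-- `I^{p,q} ∩ W_{p+q-1} = 0`. -/
lemma I_inf_W (h : IsMHS W F G) {a : ℤ} (ha : W a = ⊥) {p q : ℤ} {v : V}
    (hvI : v ∈ deligneI W F G p q) (hvW : v ∈ W (p + q - 1)) : v = 0 := by
  obtain ⟨u, hu, w, hw, huw⟩ := Submodule.mem_sup.mp hvI.2
  have hwW : w ∈ W (p + q - 2) := U_le_W h.monoW p q hw
  have huW1 : u ∈ W (p + q - 1) := by
    have he : v - w = u := by rw [← huw]; abel
    exact he ▸ Submodule.sub_mem _ hvW (h.monoW (by omega) hwW)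
  have hvT : v ∈ T W G q (p + q - 1) := by
    rw [← huw]
    refine Submodule.add_mem _ ?_ (U_le_T p q hw)
    refine term_le_T (W := W) (G := G) (b := q) (n := p + q - 1) 0 ?_
    exact ⟨h.antiG (by omega : q - ((0 : ℕ) : ℤ) ≤ q) hu.1, by simpa using huW1⟩
  have hbot := keyA h ha p q (p + q - 1) (by omega)
  have : v ∈ (⊥ : Submodule ℂ V) := hbot ▸ Submodule.mem_inf.mpr ⟨hvI.1.1, hvT⟩
  simpa using this

/-- inductive correction: a class in `F^p ∩ W_{p+q}` lying in `Ssup` up to an error in `W_k`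
can be corrected to an element of `I^{p,q}` modulo `W_{p+q-1}`. -/
lemma claimC (h : IsMHS W F G) {a : ℤ} (ha : W a = ⊥) (p q : ℤ) (d : ℕ) :
    ∀ k : ℤ, k ≤ a - 1 + d → k ≤ p + q - 1 →
    ∀ v : V, v ∈ F p → v ∈ W (p + q) → v ∈ Ssup W G p q ⊔ W k →
    ∃ v' ∈ deligneI W F G p q, v - v' ∈ W (p + q - 1) := by
  induction d with
  | zero =>
      intro k hk _ v hvF hvW hvS
      have hWk : W k = ⊥ := W_eq_bot h ha (by omega)
      rw [hWk, sup_bot_eq] at hvS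
      exact ⟨v, ⟨⟨hvF, hvW⟩, hvS⟩, by simpa using Submodule.zero_mem _⟩
  | succ d ih =>
      intro k hk hkm v hvF hvW hvS
      by_cases hle : k ≤ a - 1 + d
      · exact ih k hle hkm v hvF hvW hvS
      have hkeq : k = a + d := by omega
      obtain ⟨s, hs, w, hw, hsw⟩ := Submodule.mem_sup.mp hvS
      -- decompose the class of w in Gr_k
      have htop := (h.pure k).submodule_iSup_eq_top
      have hxmem : piW W k ⟨w, hw⟩ ∈
          ⨆ r : ℤ, (grFil W F k r ⊓ grFil W G k (k - r)) := htop ▸ Submodule.mem_top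
      rw [Submodule.mem_iSup_iff_exists_finsupp] at hxmem
      obtain ⟨c, hc, hcsum⟩ := hxmem
      -- choose suitable lifts of the components
      have hlift : ∀ r : ℤ, ∃ u : ↥(W k), piW W k u = c r ∧
          (p ≤ r → (u : V) ∈ F p) ∧ (¬ p ≤ r → (u : V) ∈ Ssup W G p q) := by
        intro r
        obtain ⟨hcF, hcG⟩ := hc r
        by_cases hr : p ≤ r
        · obtain ⟨y, hyF, hyπ⟩ := exists_rep hcF
          exact ⟨y, hyπ, fun _ => h.antiF hr hyF, fun hc' => absurd hr hc'⟩
        · obtain ⟨y, hyG, hyπ⟩ := exists_rep hcG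
          refine ⟨y, hyπ, fun hp => absurd hp hr, fun _ => ?_⟩
          by_cases hk1 : k = p + q - 1
          · refine Submodule.mem_sup_left ⟨h.antiG (by omega : q ≤ k - r) hyG, ?_⟩
            exact h.monoW (by omega : k ≤ p + q) y.2
          · refine Submodule.mem_sup_right ?_
            have hik : ((p + q - 2 - k).toNat : ℤ) = p + q - 2 - k :=
              Int.toNat_of_nonneg (by omega)
            refine le_iSup (fun i : ℕ =>
              G (q - ((i : ℤ) + 1)) ⊓ W (p + q - 2 - (i : ℤ))) (p + q - 2 - k).toNat ?_
            show (y : V) ∈ G (q - (((p + q - 2 - k).toNat : ℤ) + 1)) ⊓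
              W (p + q - 2 - ((p + q - 2 - k).toNat : ℤ))
            rw [hik]
            refine ⟨h.antiG (by omega : q - (p + q - 2 - k + 1) ≤ k - r) hyG, ?_⟩
            rw [(by omega : p + q - 2 - (p + q - 2 - k) = k)]
            exact y.2
      choose u hπ hFu hGu using hlift
      set s₁ := c.support.filter (fun r => p ≤ r) with hs₁
      set s₂ := c.support.filter (fun r => ¬ p ≤ r) with hs₂
      set A : ↥(W k) := ∑ r ∈ s₁, u r with hA
      set B : ↥(W k) := ∑ r ∈ s₂, u r with hB
      have hAco : ((A : V)) = ∑ r ∈ s₁, ((u r : V)) := by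
        simp [hA]
      have hBco : ((B : V)) = ∑ r ∈ s₂, ((u r : V)) := by
        simp [hB]
      have hAF : (A : V) ∈ F p := by
        rw [hAco]
        exact Submodule.sum_mem _ fun r hr => hFu r (Finset.mem_filter.mp hr).2
      have hBS : (B : V) ∈ Ssup W G p q := by
        rw [hBco]
        exact Submodule.sum_mem _ fun r hr => hGu r (Finset.mem_filter.mp hr).2
      have hπAB : piW W k (A + B) = piW W k ⟨w, hw⟩ := by
        rw [map_add, hA, hB, map_sum, map_sum]
        simp only [hπ]
        rw [Finset.sum_filter_add_sum_filter_not]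
        exact hcsum
      have hrem : w - ((A : V) + (B : V)) ∈ W (k - 1) := by
        have h0 : piW W k (⟨w, hw⟩ - (A + B)) = 0 := by
          rw [map_sub, hπAB, sub_self]
        have := (piW_eq_zero_iff _).1 h0
        simpa using this
      -- correct v
      have hkW : W k ≤ W (p + q) := h.monoW (by omega)
      have hkW1 : W k ≤ W (p + q - 1) := h.monoW (by omega)
      have hv₂F : v - (A : V) ∈ F p := Submodule.sub_mem _ hvF hAF
      have hv₂W : v - (A : V) ∈ W (p + q) := Submodule.sub_mem _ hvW (hkW A.2)
      have hv₂S : v - (A : V) ∈ Ssup W G p q ⊔ W (k - 1) := by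
        refine Submodule.mem_sup.mpr ⟨s + (B : V), Submodule.add_mem _ hs hBS,
          w - (A : V) - (B : V), by simpa [sub_sub] using hrem, ?_⟩
        rw [← hsw]; abel
      obtain ⟨v', hv'I, hv'⟩ := ih (k - 1) (by omega) (by omega)
        (v - (A : V)) hv₂F hv₂W hv₂S
      refine ⟨v', hv'I, ?_⟩
      have : v - v' = (v - (A : V) - v') + (A : V) := by abel
      rw [this]
      exact Submodule.add_mem _ hv' (hkW1 A.2)

/-- surjectivity of `I^{p,q} → H^{p,q}` -/
lemma liftH (h : IsMHS W F G) {a : ℤ} (ha : W a = ⊥) (p q m : ℤ) (hm : p + q = m)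
    {x : grW W m} (hx : x ∈ grFil W F m p ⊓ grFil W G m q) :
    ∃ y : ↥(W m), (y : V) ∈ deligneI W F G p q ∧ piW W m y = x := by
  subst hm
  obtain ⟨f, hfF, hfπ⟩ := exists_rep hx.1
  obtain ⟨g, hgG, hgπ⟩ := exists_rep hx.2
  have hfg : (f : V) - g ∈ W (p + q - 1) := by
    have h0 : piW W (p + q) (f - g) = 0 := by rw [map_sub, hfπ, hgπ, sub_self]
    have := (piW_eq_zero_iff _).1 h0
    simpa using this
  have hfS : (f : V) ∈ Ssup W G p q ⊔ W (p + q - 1) :=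
    Submodule.mem_sup.mpr ⟨g, Submodule.mem_sup_left ⟨hgG, g.2⟩, (f : V) - g, hfg, by abel⟩
  obtain ⟨v', hv'I, hv'⟩ := claimC h ha p q (p + q - 1 - (a - 1)).toNat (p + q - 1)
    (by have := Int.self_le_toNat (p + q - 1 - (a - 1)); omega) le_rfl
    (f : V) hfF f.2 hfS
  have hv'W : v' ∈ W (p + q) := hv'I.1.2
  refine ⟨⟨v', hv'W⟩, hv'I, ?_⟩
  rw [← hfπ]
  exact piW_eq (by simpa using Submodule.neg_mem _ hv')

/-- the class of an element of `I^{p,q}` lies in `H^{p,q}` -/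
lemma classI (h : IsMHS W F G) {p q m : ℤ} (hm : p + q = m) (z : ↥(W m))
    (hz : (z : V) ∈ deligneI W F G p q) :
    piW W m z ∈ grFil W F m p ⊓ grFil W G m (m - p) := by
  subst hm
  rw [show p + q - p = q from by ring]
  refine ⟨mem_grFil _ hz.1.1, ?_⟩
  obtain ⟨u, hu, w, hw, huw⟩ := Submodule.mem_sup.mp hz.2
  have hwW : w ∈ W (p + q - 1) := h.monoW (by omega) (U_le_W h.monoW p q hw)
  have : piW W (p + q) z = piW W (p + q) ⟨u, hu.2⟩ := piW_eq (by simpa [← huw] using hwW)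
  rw [this]
  exact mem_grFil _ hu.1

lemma I_le_W (p q : ℤ) : deligneI W F G p q ≤ W (p + q) :=
  inf_le_left.trans inf_le_right

lemma I_le_RHS {m : ℤ} (pq : ℤ × ℤ) (hle : pq.1 + pq.2 ≤ m) :
    deligneI W F G pq.1 pq.2 ≤
      ⨆ pq' : ℤ × ℤ, ⨆ _ : pq'.1 + pq'.2 ≤ m, deligneI W F G pq'.1 pq'.2 :=
  le_iSup_of_le pq (le_iSup (fun _ : pq.1 + pq.2 ≤ m => deligneI W F G pq.1 pq.2) hle)

lemma RHS_mono {m m' : ℤ} (hmm : m ≤ m') :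
    (⨆ pq : ℤ × ℤ, ⨆ _ : pq.1 + pq.2 ≤ m, deligneI W F G pq.1 pq.2) ≤
      ⨆ pq : ℤ × ℤ, ⨆ _ : pq.1 + pq.2 ≤ m', deligneI W F G pq.1 pq.2 :=
  iSup_mono fun pq => iSup_le fun hle =>
    le_iSup (fun _ : pq.1 + pq.2 ≤ m' => deligneI W F G pq.1 pq.2) (hle.trans hmm)

/-- Deligne splitting of the weight filtration -/
lemma spanning (h : IsMHS W F G) {a : ℤ} (ha : W a = ⊥) (m : ℤ) :
    W m = ⨆ pq : ℤ × ℤ, ⨆ _ : pq.1 + pq.2 ≤ m, deligneI W F G pq.1 pq.2 := by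
  refine le_antisymm ?_ (iSup_le fun pq => iSup_le fun hle =>
    (I_le_W pq.1 pq.2).trans (h.monoW hle))
  suffices Hd : ∀ d : ℕ, ∀ m : ℤ, m ≤ a - 1 + d →
      W m ≤ ⨆ pq : ℤ × ℤ, ⨆ _ : pq.1 + pq.2 ≤ m, deligneI W F G pq.1 pq.2 by
    refine Hd (m - (a - 1)).toNat m ?_
    have := Int.self_le_toNat (m - (a - 1))
    omega
  intro d
  induction d with
  | zero =>
      intro m hm
      rw [W_eq_bot h ha (by omega)]
      exact bot_le
  | succ d ih =>
      intro m hm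
      by_cases hle : m ≤ a - 1 + d
      · exact (ih m hle).trans (RHS_mono le_rfl)
      have hmeq : m = a + d := by omega
      intro w hw
      have htop := (h.pure m).submodule_iSup_eq_top
      have hxmem : piW W m ⟨w, hw⟩ ∈
          ⨆ r : ℤ, (grFil W F m r ⊓ grFil W G m (m - r)) := htop ▸ Submodule.mem_top
      rw [Submodule.mem_iSup_iff_exists_finsupp] at hxmem
      obtain ⟨c, hc, hcsum⟩ := hxmem
      have hlift : ∀ r : ℤ, ∃ y : ↥(W m),
          (y : V) ∈ deligneI W F G r (m - r) ∧ piW W m y = c r :=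
        fun r => liftH h ha r (m - r) m (by ring) (hc r)
      choose y hyI hyπ using hlift
      set Y : ↥(W m) := ∑ r ∈ c.support, y r with hY
      have hYco : ((Y : V)) = ∑ r ∈ c.support, ((y r : V)) := by simp [hY]
      have hπY : piW W m Y = piW W m ⟨w, hw⟩ := by
        rw [hY, map_sum]
        simp only [hyπ]
        exact hcsum
      have hrem : w - (Y : V) ∈ W (m - 1) := by
        have h0 : piW W m (⟨w, hw⟩ - Y) = 0 := by rw [map_sub, hπY, sub_self]
        have := (piW_eq_zero_iff _).1 h0
        simpa using this
      have hYR : (Y : V) ∈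
          ⨆ pq : ℤ × ℤ, ⨆ _ : pq.1 + pq.2 ≤ m, deligneI W F G pq.1 pq.2 := by
        rw [hYco]
        exact Submodule.sum_mem _ fun r hr =>
          I_le_RHS (r, m - r) (by simp) (hyI r)
      have hrR : w - (Y : V) ∈
          ⨆ pq : ℤ × ℤ, ⨆ _ : pq.1 + pq.2 ≤ m, deligneI W F G pq.1 pq.2 :=
        RHS_mono (by omega : m - 1 ≤ m) (ih (m - 1) (by omega) hrem)
      simpa using Submodule.add_mem _ hrR hYR

/-- independence: a finitely supported family of elements of the `I^{p,q}` summing to zero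
vanishes. -/
lemma zsum (h : IsMHS W F G) {a : ℤ} (ha : W a = ⊥) (f : (ℤ × ℤ) →₀ V)
    (hI : ∀ pq, f pq ∈ deligneI W F G pq.1 pq.2)
    (hsum : (f.sum fun _ x => x) = 0) : f = 0 := by
  suffices Hd : ∀ d : ℕ, ∀ f : (ℤ × ℤ) →₀ V,
      (∀ pq, f pq ∈ deligneI W F G pq.1 pq.2) →
      (∀ pq ∈ f.support, pq.1 + pq.2 ≤ a - 1 + d) →
      (f.sum fun _ x => x) = 0 → f = 0 by
    refine Hd (f.support.sup fun pq => (pq.1 + pq.2 - (a - 1)).toNat) f hI ?_ hsum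
    intro pq hpq
    have h1 : (pq.1 + pq.2 - (a - 1)).toNat ≤
        f.support.sup fun pq => (pq.1 + pq.2 - (a - 1)).toNat :=
      Finset.le_sup (f := fun pq : ℤ × ℤ => (pq.1 + pq.2 - (a - 1)).toNat) hpq
    have h2 := Int.self_le_toNat (pq.1 + pq.2 - (a - 1))
    omega
  clear hI hsum f
  intro d
  induction d with
  | zero =>
      intro f hI hbd hsum
      ext pq
      by_cases hpq : pq ∈ f.support
      · have : f pq ∈ W a := h.monoW (by have := hbd pq hpq; omega) (I_le_W _ _ (hI pq))
        rw [ha] at this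
        simpa using this
      · simpa using Finsupp.notMem_support_iff.mp hpq
  | succ d ih =>
      intro f hI hbd hsum
      set m : ℤ := a + d with hm
      set s := f.support.filter (fun pq => pq.1 + pq.2 = m) with hs
      have hWm : ∀ pq ∈ s, f pq ∈ W m := by
        intro pq hpq
        have := I_le_W (W := W) (F := F) (G := G) pq.1 pq.2 (hI pq)
        rwa [(Finset.mem_filter.mp hpq).2] at this
      have hs0 : ∀ pq₀ ∈ s, f pq₀ = 0 := by
        intro pq₀ hpq₀
        set z : ℤ × ℤ → ↥(W m) :=
          fun pq => if hh : pq ∈ s then ⟨f pq, hWm pq hh⟩ else 0 with hz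
        have hzco : ∀ pq ∈ s, (z pq : V) = f pq := by
          intro pq hpq; simp [hz, hpq]
        -- the sum of the weight-m components lies in W_{m-1}
        have hsplit : (∑ pq ∈ s, f pq) +
            (∑ pq ∈ f.support.filter (fun pq => ¬ pq.1 + pq.2 = m), f pq) = 0 := by
          rw [hs, Finset.sum_filter_add_sum_filter_not]
          exact hsum
        have hlow : (∑ pq ∈ f.support.filter (fun pq => ¬ pq.1 + pq.2 = m), f pq) ∈
            W (m - 1) := by
          refine Submodule.sum_mem _ fun pq hpq => ?_
          obtain ⟨hmem, hne⟩ := Finset.mem_filter.mp hpq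
          have hb := hbd pq hmem
          exact h.monoW (by omega) (I_le_W _ _ (hI pq))
        have hgW1 : (∑ pq ∈ s, f pq) ∈ W (m - 1) := by
          have : (∑ pq ∈ s, f pq) = -(∑ pq ∈ f.support.filter
              (fun pq => ¬ pq.1 + pq.2 = m), f pq) := by
            rw [eq_neg_iff_add_eq_zero]; exact hsplit
          rw [this]
          exact Submodule.neg_mem _ hlow
        have hZco : ((∑ pq ∈ s, z pq : ↥(W m)) : V) = ∑ pq ∈ s, f pq := by
          push_cast
          exact Finset.sum_congr rfl hzco
        have hZ : piW W m (∑ pq ∈ s, z pq) = 0 := by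
          rw [piW_eq_zero_iff, hZco]
          exact hgW1
        have hsum_s : (∑ pq ∈ s, piW W m (z pq)) = 0 := by rw [← map_sum]; exact hZ
        have hclass : ∀ pq ∈ s, piW W m (z pq) ∈
            grFil W F m pq.1 ⊓ grFil W G m (m - pq.1) := by
          intro pq hpq
          refine classI h (Finset.mem_filter.mp hpq).2 (z pq) ?_
          rw [hzco pq hpq]
          exact hI pq
        have hx₀eq : piW W m (z pq₀) = -(∑ pq ∈ s.erase pq₀, piW W m (z pq)) := by
          have hadd := Finset.add_sum_erase s (fun pq => piW W m (z pq)) hpq₀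
          rw [eq_neg_iff_add_eq_zero, hadd, hsum_s]
        have hx₀2 : piW W m (z pq₀) ∈
            ⨆ (j : ℤ) (_ : j ≠ pq₀.1), (grFil W F m j ⊓ grFil W G m (m - j)) := by
          rw [hx₀eq]
          refine Submodule.neg_mem _ (Submodule.sum_mem _ fun pq hpq => ?_)
          obtain ⟨hne, hmem⟩ := Finset.mem_erase.mp hpq
          have hne1 : pq.1 ≠ pq₀.1 := by
            intro he
            apply hne
            have h1 := (Finset.mem_filter.mp hmem).2
            have h2 := (Finset.mem_filter.mp hpq₀).2
            exact Prod.ext he (by omega)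
          exact (le_iSup_of_le pq.1 (le_iSup (fun _ : pq.1 ≠ pq₀.1 =>
            grFil W F m pq.1 ⊓ grFil W G m (m - pq.1)) hne1) :
              grFil W F m pq.1 ⊓ grFil W G m (m - pq.1) ≤
                ⨆ (j : ℤ) (_ : j ≠ pq₀.1), (grFil W F m j ⊓ grFil W G m (m - j)))
              (hclass pq hmem)
        have hdisj := iSupIndep_def.mp (h.pure m).submodule_iSupIndep pq₀.1
        have hx₀0 : piW W m (z pq₀) = 0 :=
          Submodule.disjoint_def.mp hdisj _ (hclass pq₀ hpq₀) hx₀2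
        have hfW1 : f pq₀ ∈ W (m - 1) := by
          rw [← hzco pq₀ hpq₀]
          exact (piW_eq_zero_iff _).1 hx₀0
        have hmeq : pq₀.1 + pq₀.2 = m := (Finset.mem_filter.mp hpq₀).2
        exact I_inf_W h ha (hI pq₀) (by rwa [hmeq])
      have hbd' : ∀ pq ∈ f.support, pq.1 + pq.2 ≤ a - 1 + d := by
        intro pq hpq
        have hb := hbd pq hpq
        by_cases he : pq.1 + pq.2 = m
        · exact absurd (hs0 pq (Finset.mem_filter.mpr ⟨hpq, he⟩))
            (Finsupp.mem_support_iff.mp hpq)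
        · omega
      exact ih f hI hbd' hsum

lemma indep (h : IsMHS W F G) {a : ℤ} (ha : W a = ⊥) :
    iSupIndep (fun pq : ℤ × ℤ => deligneI W F G pq.1 pq.2) := by
  rw [iSupIndep_def]
  intro pq₀
  rw [Submodule.disjoint_def]
  intro x hx1 hx2
  rw [Submodule.mem_iSup_iff_exists_finsupp] at hx2
  obtain ⟨c, hc, hcsum⟩ := hx2
  have hc' : ∀ pq, pq ≠ pq₀ → c pq ∈ deligneI W F G pq.1 pq.2 := by
    intro pq hne
    have := hc pq
    rwa [iSup_pos hne] at this
  have hc0 : c pq₀ = 0 := by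
    have := hc pq₀
    rw [iSup_neg (not_not_intro rfl)] at this
    simpa using this
  set g : (ℤ × ℤ) →₀ V := c - Finsupp.single pq₀ x with hg
  have hgI : ∀ pq, g pq ∈ deligneI W F G pq.1 pq.2 := by
    intro pq
    by_cases he : pq = pq₀
    · subst he
      rw [hg, Finsupp.sub_apply, Finsupp.single_eq_same, hc0, zero_sub]
      exact Submodule.neg_mem _ hx1
    · rw [hg, Finsupp.sub_apply, Finsupp.single_eq_of_ne' (Ne.symm he), sub_zero]
      exact hc' pq he
  have hgsum : (g.sum fun _ x => x) = 0 := by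
    rw [hg, Finsupp.sum_sub_index (fun _ _ _ => rfl)]
    rw [Finsupp.sum_single_index rfl, hcsum, sub_self]
  have hg0 := zsum h ha g hgI hgsum
  have : g pq₀ = -x := by
    rw [hg, Finsupp.sub_apply, Finsupp.single_eq_same, hc0, zero_sub]
  rw [hg0] at this
  simpa using this.symm

end Deligne

/-- Deligne's splitting: for a mixed Hodge structure `(V, W, F)` (with conjugate
Hodge filtration `G = F̄`), the subspaces
`I^{p,q} = (F^p ∩ W_{p+q}) ∩ ((F̄^q ∩ W_{p+q}) + Σ_{i>0} (F̄^{q-i} ∩ W_{p+q-1-i}))`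
satisfy `V_ℂ = ⊕_{p,q} I^{p,q}` and `W_m V_ℂ = ⊕_{p+q ≤ m} I^{p,q}`. -/
theorem deligne_splitting {V : Type} [AddCommGroup V] [Module ℂ V]
    (W F G : ℤ → Submodule ℂ V) (h : IsMHS W F G) :
    DirectSum.IsInternal (fun pq : ℤ × ℤ => deligneI W F G pq.1 pq.2) ∧
      ∀ m : ℤ, W m = ⨆ pq : ℤ × ℤ, ⨆ _ : pq.1 + pq.2 ≤ m, deligneI W F G pq.1 pq.2 := by
  obtain ⟨a, ha⟩ := h.w_bot
  obtain ⟨b, hb⟩ := h.w_top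
  constructor
  · rw [DirectSum.isInternal_submodule_iff_iSupIndep_and_iSup_eq_top]
    refine ⟨Deligne.indep h ha, ?_⟩
    rw [eq_top_iff, ← hb, Deligne.spanning h ha b]
    exact iSup_mono fun pq => iSup_le fun _ => le_rfl
  · exact Deligne.spanning h ha
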